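/- For every n ≥ 1 and every partition σ of [n], the set of noncrossing partitions π of [n] with σ ≤ π has a least element (in the refinement order); this least element is called the noncrossing closure σ̄ of σ. -/
import Mathlib


open Finset

open scoped Classical

/-- A partition of `[n]` is noncrossing if there are no two distinct blocks `B₁, B₂`
and elements `a, c ∈ B₁`, `b, d ∈ B₂` with `a < b < c < d`. -/
def IsNoncrossing {n : ℕ} (π : Finpartition (Finset.univ : Finset (Fin n))) : Prop :=
  ¬ ∃ B₁ ∈ π.parts, ∃ B₂ ∈ π.parts, B₁ ≠ B₂ ∧
      ∃ a ∈ B₁, ∃ b ∈ B₂, ∃ c ∈ B₁, ∃ d ∈ B₂, a < b ∧ b < c ∧ c < d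

/-- `S` is a union of blocks of the partition `π`. -/
def IsUnionOfBlocks {n : ℕ} (π : Finpartition (Finset.univ : Finset (Fin n)))
    (S : Finset (Fin n)) : Prop :=
  ∃ P ⊆ π.parts, S = P.sup id

/-- A partition of `[n]` is connected if no proper (nonempty) subinterval of `[n]`
is a union of blocks. -/
def IsConnectedPartition {n : ℕ} (π : Finpartition (Finset.univ : Finset (Fin n))) : Prop :=
  ∀ i j : Fin n, i ≤ j → Finset.Icc i j ≠ Finset.univ → ¬ IsUnionOfBlocks π (Finset.Icc i j)

/-- A partition of `[n]` is irreducible if no proper initial segment `{1,…,k}`, `1 ≤ k < n`,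
is a union of blocks. -/
def IsIrreduciblePartition {n : ℕ} (π : Finpartition (Finset.univ : Finset (Fin n))) : Prop :=
  ∀ k : Fin n, (k : ℕ) + 1 < n → ¬ IsUnionOfBlocks π (Finset.Iic k)

/-- An interval partition of `[n]` is a partition all of whose blocks are intervals
of consecutive integers. -/
def IsIntervalPartition {n : ℕ} (π : Finpartition (Finset.univ : Finset (Fin n))) : Prop :=
  ∀ B ∈ π.parts, ∃ i j : Fin n, B = Finset.Icc i j

/-- `a_π = ∏_{B ∈ π} a_{|B|}`. -/
noncomputable def partWeight {n : ℕ} (a : ℕ → ℝ)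
    (π : Finpartition (Finset.univ : Finset (Fin n))) : ℝ :=
  ∏ B ∈ π.parts, a B.card

lemma samePart_inf {n : ℕ} (P Q : Finpartition (Finset.univ : Finset (Fin n))) (x y : Fin n) :
    (∃ B ∈ (P ⊓ Q).parts, x ∈ B ∧ y ∈ B) ↔
      (∃ B ∈ P.parts, x ∈ B ∧ y ∈ B) ∧ (∃ B ∈ Q.parts, x ∈ B ∧ y ∈ B) := by
  constructor
  · rintro ⟨B, hB, hx, hy⟩
    rw [Finpartition.parts_inf] at hB
    obtain ⟨⟨b, c⟩, hbc, rfl⟩ := Finset.mem_of_mem_erase hB |> Finset.mem_image.1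
    rw [Finset.mem_product] at hbc
    rw [Finset.inf_eq_inter, Finset.mem_inter] at hx hy
    exact ⟨⟨b, hbc.1, hx.1, hy.1⟩, ⟨c, hbc.2, hx.2, hy.2⟩⟩
  · rintro ⟨⟨b, hb, hxb, hyb⟩, ⟨c, hc, hxc, hyc⟩⟩
    refine ⟨b ∩ c, ?_, Finset.mem_inter.2 ⟨hxb, hxc⟩, Finset.mem_inter.2 ⟨hyb, hyc⟩⟩
    rw [Finpartition.parts_inf]
    refine Finset.mem_erase.2 ⟨?_, Finset.mem_image.2 ⟨(b, c), Finset.mem_product.2 ⟨hb, hc⟩, rfl⟩⟩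
    intro h
    have : x ∈ b ∩ c := Finset.mem_inter.2 ⟨hxb, hxc⟩
    rw [h] at this
    simp at this

lemma isNoncrossing_inf {n : ℕ} {P Q : Finpartition (Finset.univ : Finset (Fin n))}
    (hP : IsNoncrossing P) (hQ : IsNoncrossing Q) : IsNoncrossing (P ⊓ Q) := by
  rintro ⟨B₁, hB₁, B₂, hB₂, hne, a, ha, b, hb, c, hc, d, hd, hab, hbc, hcd⟩
  have hac := (samePart_inf P Q a c).1 ⟨B₁, hB₁, ha, hc⟩
  have hbd := (samePart_inf P Q b d).1 ⟨B₂, hB₂, hb, hd⟩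
  obtain ⟨⟨bP, hbP, haP, hcP⟩, ⟨bQ, hbQ, haQ, hcQ⟩⟩ := hac
  obtain ⟨⟨cP, hcP', hbP', hdP⟩, ⟨cQ, hcQ', hbQ', hdQ⟩⟩ := hbd
  by_cases hPe : bP = cP
  · by_cases hQe : bQ = cQ
    · -- a and b lie in the same part of both P and Q, so in the same part of P ⊓ Q
      have : ∃ B ∈ (P ⊓ Q).parts, a ∈ B ∧ b ∈ B :=
        (samePart_inf P Q a b).2 ⟨⟨bP, hbP, haP, hPe ▸ hbP'⟩, ⟨bQ, hbQ, haQ, hQe ▸ hbQ'⟩⟩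
      obtain ⟨B, hB, haB, hbB⟩ := this
      have e1 : B = B₁ := (P ⊓ Q).eq_of_mem_parts hB hB₁ haB ha
      have e2 : B = B₂ := (P ⊓ Q).eq_of_mem_parts hB hB₂ hbB hb
      exact hne (e1 ▸ e2)
    · exact hQ ⟨bQ, hbQ, cQ, hcQ', hQe, a, haQ, b, hbQ', c, hcQ, d, hdQ, hab, hbc, hcd⟩
  · exact hP ⟨bP, hbP, cP, hcP', hPe, a, haP, b, hbP', c, hcP, d, hdP, hab, hbc, hcd⟩

/-- Every partition `σ` of `[n]` has a noncrossing closure: a least noncrossing partition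
above `σ` in the refinement order. -/
theorem exists_noncrossing_closure (n : ℕ) (hn : 1 ≤ n)
    (σ : Finpartition (Finset.univ : Finset (Fin n))) :
    ∃ πbar : Finpartition (Finset.univ : Finset (Fin n)),
      IsNoncrossing πbar ∧ σ ≤ πbar ∧
        ∀ π : Finpartition (Finset.univ : Finset (Fin n)),
          IsNoncrossing π → σ ≤ π → πbar ≤ π := by
    classical
  set S : Finset (Finpartition (Finset.univ : Finset (Fin n))) :=
    Finset.univ.filter (fun π => IsNoncrossing π ∧ σ ≤ π) with hS
  have htop : (⊤ : Finpartition (Finset.univ : Finset (Fin n))) ∈ S := by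
    rw [hS, Finset.mem_filter]
    refine ⟨Finset.mem_univ _, ?_, le_top⟩
    rintro ⟨B₁, hB₁, B₂, hB₂, hne, -⟩
    have h1 := Finpartition.parts_top_subset _ hB₁
    have h2 := Finpartition.parts_top_subset _ hB₂
    rw [Finset.mem_singleton] at h1 h2
    exact hne (h1.trans h2.symm)
  have hSne : S.Nonempty := ⟨⊤, htop⟩
  refine ⟨S.inf' hSne id, ?_, ?_, ?_⟩
  · refine Finset.inf'_induction hSne id (fun a ha b hb => isNoncrossing_inf ha hb) ?_
    intro b hb
    exact ((Finset.mem_filter.1 hb).2).1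
  · exact Finset.le_inf' hSne id fun b hb => ((Finset.mem_filter.1 hb).2).2
  · intro π hπ hσπ
    exact Finset.inf'_le id (Finset.mem_filter.2 ⟨Finset.mem_univ _, hπ, hσπ⟩)
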